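/- arXiv:2406.04395 — 3 statements merged into one kernel-verified Lean document; each statement's English description precedes it below -/
import Mathlib

section
/- (Corollary 1: MUBs give the tightest bound.) For any choice of the m orthonormal bases, λ(C) ≥ 1, and if the bases are pairwise mutually unbiased (i.e., |⟨e^z_a, e^{z'}_{a'}⟩|² = 1/d for all z ≠ z' and all a, a'), then λ(C) = 1 and T(C) = 1. Consequently, for every 1 ≤ k ≤ d, the bound B_k = k(m − T(C))/d + T(C) satisfies B_k ≥ k(m − 1)/d + 1, with equality when the bases are pairwise mutually unbiased. -/
open Matrix BigOperators

/-- `c^{z,z'}_min = min_{a,a'} |⟨e^z_a, e^{z'}_{a'}⟩|²`. -/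
noncomputable def cminP (d m : ℕ) (e : Fin m → Fin d → Fin d → ℂ) (z z' : Fin m) : ℝ :=
  ⨅ q : Fin d × Fin d, ‖star (e z q.1) ⬝ᵥ e z' q.2‖ ^ 2

/-- `G^{z,z'} = 1 − (d+1)c^{z,z'}_min + (1/d)Σ_{a,a'} |⟨e^z_a, e^{z'}_{a'}⟩|⁴`. -/
noncomputable def GP (d m : ℕ) (e : Fin m → Fin d → Fin d → ℂ) (z z' : Fin m) : ℝ :=
  1 - ((d : ℝ) + 1) * cminP d m e z z' +
    (1 / d) * ∑ a : Fin d, ∑ a' : Fin d, ‖star (e z a) ⬝ᵥ e z' a'‖ ^ 4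

/-- `λ(C) = (1/2)(1 + √(1 + 2d Σ_{z≠z'} G^{z,z'}))`. -/
noncomputable def lamC (d m : ℕ) (e : Fin m → Fin d → Fin d → ℂ) : ℝ :=
  (1 + Real.sqrt (1 + 2 * d *
    ∑ z : Fin m, ∑ z' : Fin m, if z = z' then 0 else GP d m e z z')) / 2

/-- `T(C) = min{λ(C), m}`. -/
noncomputable def TCval (d m : ℕ) (e : Fin m → Fin d → Fin d → ℂ) : ℝ :=
  min (lamC d m e) m

lemma parseval (d m : ℕ) (e : Fin m → Fin d → Fin d → ℂ)
    (honb : ∀ z a b, star (e z a) ⬝ᵥ e z b = (if a = b then (1 : ℂ) else 0))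
    (z z' : Fin m) (a : Fin d) :
    ∑ a' : Fin d, ‖star (e z a) ⬝ᵥ e z' a'‖ ^ 2 = 1 := by
  set M : Matrix (Fin d) (Fin d) ℂ := Matrix.of (fun a' i => e z' a' i) with hM
  have hMMH : M * Mᴴ = 1 := by
    ext x y
    have := honb z' y x
    simp only [Matrix.mul_apply, Matrix.conjTranspose_apply, Matrix.one_apply, hM,
      Matrix.of_apply, Matrix.star_apply]
    rw [show (∑ i, e z' x i * star (e z' y i)) = star (e z' y) ⬝ᵥ e z' x by
      simp [dotProduct, mul_comm]]
    rw [this]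
    simp [eq_comm]
  have hHM : Mᴴ * M = 1 := mul_eq_one_comm.mp hMMH
  set v : Fin d → ℂ := e z a with hv
  set w : Fin d → ℂ := M *ᵥ star v with hw
  have hwa : ∀ a', star v ⬝ᵥ e z' a' = w a' := by
    intro a'
    simp [hw, Matrix.mulVec, dotProduct, hM, mul_comm]
  have hdot : star w ⬝ᵥ w = v ⬝ᵥ star v := by
    rw [hw, Matrix.star_mulVec, star_star, dotProduct_mulVec,
      Matrix.vecMul_vecMul, hHM, Matrix.vecMul_one]
  have hvv : v ⬝ᵥ star v = 1 := by
    have := honb z a a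
    simp only [if_true, eq_self_iff_true] at this
    rw [← this]
    simp [dotProduct, mul_comm, hv]
  have key : (↑(∑ a' : Fin d, ‖star v ⬝ᵥ e z' a'‖ ^ 2) : ℂ) = 1 := by
    push_cast
    calc (∑ a' : Fin d, (‖star v ⬝ᵥ e z' a'‖ ^ 2 : ℂ))
        = ∑ a' : Fin d, star (w a') * w a' := by
          refine Finset.sum_congr rfl fun a' _ => ?_
          rw [hwa a']
          rw [Complex.star_def, ← Complex.normSq_eq_conj_mul_self, ← Complex.sq_norm]
          norm_cast
      _ = star w ⬝ᵥ w := by simp [dotProduct]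
      _ = 1 := by rw [hdot, hvv]
  exact_mod_cast key

lemma GP_nonneg (d m : ℕ) (hd : 2 ≤ d) (e : Fin m → Fin d → Fin d → ℂ)
    (honb : ∀ z a b, star (e z a) ⬝ᵥ e z b = (if a = b then (1 : ℂ) else 0))
    (z z' : Fin m) : 0 ≤ GP d m e z z' := by
  have hd0 : (0:ℝ) < d := by positivity
  set f : Fin d × Fin d → ℝ := fun q => ‖star (e z q.1) ⬝ᵥ e z' q.2‖ ^ 2 with hf
  have hS2 : ∑ q : Fin d × Fin d, f q = d := by
    rw [Fintype.sum_prod_type]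
    simp only [hf]
    rw [Finset.sum_congr rfl fun a _ => parseval d m e honb z z' a]
    simp
  have hcmin : cminP d m e z z' ≤ 1 / d := by
    have hle : ∀ q, cminP d m e z z' ≤ f q := fun q =>
      ciInf_le (Finite.bddBelow_range _) q
    have h1 : (d:ℝ)^2 * cminP d m e z z' ≤ (d:ℝ) := by
      calc (d:ℝ)^2 * cminP d m e z z' = ∑ _q : Fin d × Fin d, cminP d m e z z' := by
            rw [Finset.sum_const, Finset.card_univ, Fintype.card_prod, Fintype.card_fin,
              nsmul_eq_mul]
            push_cast; ring
        _ ≤ ∑ q : Fin d × Fin d, f q := Finset.sum_le_sum fun q _ => hle q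
        _ = d := hS2
    rw [div_eq_inv_mul, ← mul_le_mul_iff_right₀ (by positivity : (0:ℝ) < (d:ℝ)^2)]
    calc (d:ℝ)^2 * cminP d m e z z' ≤ d := h1
      _ ≤ (d:ℝ)^2 * ((d:ℝ)⁻¹ * 1) := by
          rw [mul_one, sq]
          rw [mul_assoc, mul_inv_cancel₀ (ne_of_gt hd0), mul_one]
  have hS4 : (1:ℝ) ≤ ∑ a : Fin d, ∑ a' : Fin d, ‖star (e z a) ⬝ᵥ e z' a'‖ ^ 4 := by
    have hcs := sq_sum_le_card_mul_sum_sq (s := (Finset.univ : Finset (Fin d × Fin d))) (f := f)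
    rw [hS2, Finset.card_univ, Fintype.card_prod, Fintype.card_fin] at hcs
    have hEq : ∑ q : Fin d × Fin d, f q ^ 2
        = ∑ a : Fin d, ∑ a' : Fin d, ‖star (e z a) ⬝ᵥ e z' a'‖ ^ 4 := by
      rw [Fintype.sum_prod_type]
      refine Finset.sum_congr rfl fun a _ => Finset.sum_congr rfl fun a' _ => ?_
      simp only [hf]
      ring
    rw [hEq] at hcs
    push_cast at hcs
    set S := ∑ a : Fin d, ∑ a' : Fin d, ‖star (e z a) ⬝ᵥ e z' a'‖ ^ 4 with hS
    have h2 : (d:ℝ)*(d:ℝ)*1 ≤ (d:ℝ)*(d:ℝ)*S := by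
      have : (d:ℝ)^2 = (d:ℝ)*(d:ℝ) := by ring
      linarith [hcs, this.symm.le]
    exact le_of_mul_le_mul_left h2 (mul_pos hd0 hd0)
  unfold GP
  set S := ∑ a : Fin d, ∑ a' : Fin d, ‖star (e z a) ⬝ᵥ e z' a'‖ ^ 4 with hS
  have h3 : ((d:ℝ)+1) * cminP d m e z z' ≤ ((d:ℝ)+1) * (1/d) :=
    mul_le_mul_of_nonneg_left hcmin (by positivity)
  have h4 : (1/(d:ℝ)) * 1 ≤ (1/(d:ℝ)) * S := mul_le_mul_of_nonneg_left hS4 (by positivity)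
  have h5 : ((d:ℝ)+1) * (1/d) = 1 + 1/d := by field_simp
  linarith


lemma cminP_mub (d m : ℕ) (hd : 2 ≤ d) (e : Fin m → Fin d → Fin d → ℂ) (z z' : Fin m)
    (h : ∀ a a' : Fin d, ‖star (e z a) ⬝ᵥ e z' a'‖ ^ 2 = 1 / d) :
    cminP d m e z z' = 1 / d := by
  have : (0:ℕ) < d := by omega
  haveI : NeZero d := ⟨by omega⟩
  apply le_antisymm
  · have := ciInf_le (Finite.bddBelow_range
      (fun q : Fin d × Fin d => ‖star (e z q.1) ⬝ᵥ e z' q.2‖ ^ 2)) ((0 : Fin d), (0 : Fin d))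
    rw [h 0 0] at this
    exact this
  · exact le_ciInf fun q => (h q.1 q.2).ge

lemma GP_mub (d m : ℕ) (hd : 2 ≤ d) (e : Fin m → Fin d → Fin d → ℂ) (z z' : Fin m)
    (h : ∀ a a' : Fin d, ‖star (e z a) ⬝ᵥ e z' a'‖ ^ 2 = 1 / d) :
    GP d m e z z' = 0 := by
  have hd0 : (0:ℝ) < d := by positivity
  have hS4 : ∑ a : Fin d, ∑ a' : Fin d, ‖star (e z a) ⬝ᵥ e z' a'‖ ^ 4
      = (d:ℝ) * ((d:ℝ) * (1/(d:ℝ))^2) := by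
    rw [Finset.sum_congr rfl fun a _ => Finset.sum_congr rfl fun a' _ => (by
      rw [show (4:ℕ) = 2*2 from rfl, pow_mul, h a a'] :
      ‖star (e z a) ⬝ᵥ e z' a'‖ ^ 4 = (1/(d:ℝ))^2)]
    simp [Finset.sum_const, mul_comm]
  unfold GP
  rw [hS4, cminP_mub d m hd e z z' h]
  field_simp
  ring

/-- Corollary 1 (MUBs give the tightest bound): `λ(C) ≥ 1` always; if the bases are pairwise
mutually unbiased then `λ(C) = 1` and `T(C) = 1`; consequently for every `1 ≤ k ≤ d` the
bound `B_k = k(m − T(C))/d + T(C)` satisfies `B_k ≥ k(m−1)/d + 1`, with equality for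
pairwise mutually unbiased bases. -/
theorem stmt8 (d m : ℕ) (hd : 2 ≤ d) (hm : 2 ≤ m)
    (e : Fin m → Fin d → Fin d → ℂ)
    (honb : ∀ z a b, star (e z a) ⬝ᵥ e z b = (if a = b then (1 : ℂ) else 0)) :
    1 ≤ lamC d m e ∧
    ((∀ z z' : Fin m, z ≠ z' → ∀ a a' : Fin d,
        ‖star (e z a) ⬝ᵥ e z' a'‖ ^ 2 = 1 / d) →
      lamC d m e = 1 ∧ TCval d m e = 1) ∧
    (∀ k : ℕ, 1 ≤ k → k ≤ d →
      ((k : ℝ) * ((m : ℝ) - 1) / d + 1 ≤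
          (k : ℝ) * ((m : ℝ) - TCval d m e) / d + TCval d m e ∧
        ((∀ z z' : Fin m, z ≠ z' → ∀ a a' : Fin d,
            ‖star (e z a) ⬝ᵥ e z' a'‖ ^ 2 = 1 / d) →
          (k : ℝ) * ((m : ℝ) - TCval d m e) / d + TCval d m e =
            (k : ℝ) * ((m : ℝ) - 1) / d + 1))) := by
  have hd0 : (0:ℝ) < d := by positivity
  set S := ∑ z : Fin m, ∑ z' : Fin m, if z = z' then 0 else GP d m e z z' with hS
  have hSnn : 0 ≤ S := by
    refine Finset.sum_nonneg fun z _ => Finset.sum_nonneg fun z' _ => ?_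
    by_cases hzz : z = z'
    · simp [hzz]
    · simp only [if_neg hzz]
      exact GP_nonneg d m hd e honb z z'
  have part1 : 1 ≤ lamC d m e := by
    unfold lamC
    rw [← hS]
    have h1 : (1:ℝ) ≤ 1 + 2 * d * S := by nlinarith
    have h2 : (1:ℝ) ≤ Real.sqrt (1 + 2 * d * S) := by
      rw [show (1:ℝ) = Real.sqrt 1 from Real.sqrt_one.symm]
      exact Real.sqrt_le_sqrt (by rw [Real.sqrt_one]; linarith)
    linarith
  have part2 : (∀ z z' : Fin m, z ≠ z' → ∀ a a' : Fin d,
      ‖star (e z a) ⬝ᵥ e z' a'‖ ^ 2 = 1 / d) →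
      lamC d m e = 1 ∧ TCval d m e = 1 := by
    intro h
    have hS0 : S = 0 := by
      rw [hS]
      refine Finset.sum_eq_zero fun z _ => Finset.sum_eq_zero fun z' _ => ?_
      by_cases hzz : z = z'
      · simp [hzz]
      · rw [if_neg hzz, GP_mub d m hd e z z' (h z z' hzz)]
    have hlam : lamC d m e = 1 := by
      unfold lamC
      rw [← hS, hS0]
      norm_num
    refine ⟨hlam, ?_⟩
    unfold TCval
    rw [hlam]
    have : (1:ℝ) ≤ (m:ℝ) := by exact_mod_cast Nat.one_le_of_lt hm
    exact min_eq_left this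
  refine ⟨part1, part2, fun k hk1 hkd => ?_⟩
  have ht1 : (1:ℝ) ≤ TCval d m e := by
    refine le_min part1 ?_
    exact_mod_cast Nat.one_le_of_lt hm
  have hkd' : (k:ℝ) ≤ (d:ℝ) := by exact_mod_cast hkd
  constructor
  · have key : 0 ≤ (TCval d m e - 1) * (1 - (k:ℝ)/d) := by
      have : (k:ℝ)/d ≤ 1 := (div_le_one hd0).2 hkd'
      exact mul_nonneg (by linarith) (by linarith)
    have hexp : (TCval d m e - 1) * (1 - (k:ℝ)/d)
        = ((k : ℝ) * ((m : ℝ) - TCval d m e) / d + TCval d m e)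
          - ((k : ℝ) * ((m : ℝ) - 1) / d + 1) := by
      field_simp
      ring
    linarith [hexp ▸ key]
  · intro h
    rw [(part2 h).2]
end

section
/- (Proposition 3, constrained fourth-moment maximization.) Let d ≥ 1 be an integer, let 0 ≤ c_min ≤ c_max ≤ 1 be reals, and let x ∈ ℝ^{d²} satisfy Σ_{i=jd+1}^{jd+d} x_i² = 1 for each j = 0,…,d−1 and √c_min ≤ x_i ≤ √c_max for all i. Then Σ_{i=1}^{d²} x_i⁴ ≤ d·[ L c_max² + (d − L − 1) c_min² + (1 − L c_max − (d − L − 1) c_min)² ], where L = ⌊(1 − c_min d)/(c_max − c_min)⌋ if c_max > c_min and L = d if c_max = c_min. -/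
open BigOperators

/-- The optimal value `L` from Proposition 3: `L = ⌊(1 − c_min d)/(c_max − c_min)⌋` if
`c_max > c_min`, and `L = d` if `c_max = c_min`. -/
noncomputable def Lval (d : ℕ) (cmin cmax : ℝ) : ℝ :=
  if cmin < cmax then ((⌊(1 - cmin * d) / (cmax - cmin)⌋ : ℤ) : ℝ) else (d : ℝ)

/-- `Ω = L c_max² + (d − L − 1) c_min² + (1 − L c_max − (d − L − 1) c_min)²`. -/
noncomputable def Omegaval (d : ℕ) (cmin cmax : ℝ) : ℝ :=
  Lval d cmin cmax * cmax ^ 2 + ((d : ℝ) - Lval d cmin cmax - 1) * cmin ^ 2 +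
    (1 - Lval d cmin cmax * cmax - ((d : ℝ) - Lval d cmin cmax - 1) * cmin) ^ 2

/-- Key additive lemma: the "fractional part profit" `s(c-s)` where `s = S mod c` is a
lower bound for `∑ uᵢ (c - uᵢ)` over `uᵢ ∈ [0, c]` with `∑ uᵢ = S`. -/
lemma lemB {ι : Type*} [DecidableEq ι] (c : ℝ) (hc : 0 < c) (s : Finset ι) (u : ι → ℝ)
    (h : ∀ i ∈ s, 0 ≤ u i ∧ u i ≤ c) :
    ((∑ i ∈ s, u i) - c * ⌊(∑ i ∈ s, u i) / c⌋) *
      (c - ((∑ i ∈ s, u i) - c * ⌊(∑ i ∈ s, u i) / c⌋))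
      ≤ ∑ i ∈ s, u i * (c - u i) := by
  classical
  induction s using Finset.induction_on with
  | empty => simp
  | @insert a t ha ih =>
    have hua := h a (Finset.mem_insert_self a t)
    have ih' := ih (fun i hi => h i (Finset.mem_insert_of_mem hi))
    set S := ∑ i ∈ t, u i with hSdef
    have hsum : ∑ i ∈ insert a t, u i = u a + S := Finset.sum_insert ha
    have hsum2 : ∑ i ∈ insert a t, u i * (c - u i) = u a * (c - u a) + ∑ i ∈ t, u i * (c - u i) :=
      Finset.sum_insert ha
    set n : ℤ := ⌊S / c⌋ with hn
    have hfl : (n : ℝ) ≤ S / c := Int.floor_le _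
    have hfu : S / c < n + 1 := Int.lt_floor_add_one _
    have hs0l : 0 ≤ S - c * n := by
      have := mul_le_mul_of_nonneg_left hfl hc.le
      rw [mul_div_cancel₀ _ hc.ne'] at this
      linarith
    have hs0u : S - c * n < c := by
      have := mul_lt_mul_of_pos_left hfu hc
      rw [mul_div_cancel₀ _ hc.ne'] at this
      nlinarith
    rw [hsum, hsum2]
    by_cases hcase : (S - c * n) + u a < c
    · have hfloor : ⌊(u a + S) / c⌋ = n := by
        rw [Int.floor_eq_iff]
        constructor
        · rw [le_div_iff₀ hc]; nlinarith
        · rw [div_lt_iff₀ hc]; push_cast; nlinarith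
      rw [hfloor]
      nlinarith [hua.1, hua.2, hs0l, hs0u, ih', mul_nonneg hs0l hua.1]
    · have hfloor : ⌊(u a + S) / c⌋ = n + 1 := by
        rw [Int.floor_eq_iff]
        constructor
        · rw [le_div_iff₀ hc]; push_cast; nlinarith
        · rw [div_lt_iff₀ hc]; push_cast; nlinarith
      rw [hfloor]
      push_cast
      nlinarith [hua.1, hua.2, hs0l, hs0u, ih',
        mul_nonneg (by linarith : (0:ℝ) ≤ c - (S - c * n)) (by linarith [hua.2] : (0:ℝ) ≤ c - u a)]

/-- Per-block bound in the case `a < b`. -/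
lemma block (d : ℕ) (a b : ℝ) (h0 : 0 ≤ a) (hab : a < b)
    (y : Fin d → ℝ) (hs : ∑ i, y i = 1) (hb : ∀ i, a ≤ y i ∧ y i ≤ b) :
    ∑ i, y i ^ 2 ≤ Omegaval d a b := by
  have hc : 0 < b - a := sub_pos.mpr hab
  have key := lemB (b - a) hc Finset.univ (fun i => y i - a)
    (fun i _ => ⟨by linarith [(hb i).1], by linarith [(hb i).2]⟩)
  have hS : ∑ i : Fin d, (y i - a) = 1 - a * d := by
    rw [Finset.sum_sub_distrib, hs]
    simp [mul_comm]
  rw [hS] at key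
  have expand : ∑ i, y i ^ 2
      = (a + b) - (d : ℝ) * (a * b) - ∑ i : Fin d, (y i - a) * ((b - a) - (y i - a)) := by
    have h1 : ∀ i ∈ Finset.univ, y i ^ 2
        = ((a + b) * y i - a * b) - (y i - a) * ((b - a) - (y i - a)) := by
      intro i _; ring
    rw [Finset.sum_congr rfl h1, Finset.sum_sub_distrib, Finset.sum_sub_distrib,
      ← Finset.mul_sum, hs]
    simp
    try ring
  rw [expand]
  set L : ℝ := ((⌊(1 - a * ↑d) / (b - a)⌋ : ℤ) : ℝ) with hL
  have hOmega : Omegaval d a b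
      = (a + b) - (d : ℝ) * (a * b)
        - ((1 - a * d) - (b - a) * L) * ((b - a) - ((1 - a * d) - (b - a) * L)) := by
    rw [Omegaval, Lval, if_pos hab, ← hL]
    ring
  rw [hOmega]
  linarith [key]

/-- Proposition 3 (constrained fourth-moment maximization): if `x ∈ ℝ^{d²}` (indexed here
as `d` blocks of `d` coordinates) satisfies `Σ_{i ∈ block j} x_i² = 1` for each block `j`
and `√c_min ≤ x_i ≤ √c_max` for all `i`, where `0 ≤ c_min ≤ c_max ≤ 1`, then
`Σ_i x_i⁴ ≤ d·[L c_max² + (d−L−1)c_min² + (1 − L c_max − (d−L−1)c_min)²]`. -/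
theorem stmt9 (d : ℕ) (hd : 1 ≤ d) (cmin cmax : ℝ)
    (h0 : 0 ≤ cmin) (h1 : cmin ≤ cmax) (h2 : cmax ≤ 1)
    (x : Fin d → Fin d → ℝ)
    (hnorm : ∀ j, ∑ i, x j i ^ 2 = 1)
    (hbound : ∀ j i, Real.sqrt cmin ≤ x j i ∧ x j i ≤ Real.sqrt cmax) :
    ∑ j, ∑ i, x j i ^ 4 ≤ (d : ℝ) * Omegaval d cmin cmax := by
  have hsq : ∀ j i, cmin ≤ x j i ^ 2 ∧ x j i ^ 2 ≤ cmax := by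
    intro j i
    obtain ⟨hl, hu⟩ := hbound j i
    have hx0 : 0 ≤ x j i := le_trans (Real.sqrt_nonneg cmin) hl
    constructor
    · calc cmin = Real.sqrt cmin ^ 2 := (Real.sq_sqrt h0).symm
        _ ≤ x j i ^ 2 := by
            apply pow_le_pow_left₀ (Real.sqrt_nonneg cmin) hl
    · calc x j i ^ 2 ≤ Real.sqrt cmax ^ 2 := pow_le_pow_left₀ hx0 hu 2
        _ = cmax := Real.sq_sqrt (le_trans h0 h1)
  have hsum4 : ∀ j, ∑ i, x j i ^ 4 = ∑ i, (x j i ^ 2) ^ 2 := by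
    intro j; apply Finset.sum_congr rfl; intro i _; ring
  rcases lt_or_eq_of_le h1 with hlt | heq
  · -- cmin < cmax
    have hblock : ∀ j, ∑ i, x j i ^ 4 ≤ Omegaval d cmin cmax := by
      intro j
      rw [hsum4 j]
      exact block d cmin cmax h0 hlt (fun i => x j i ^ 2) (hnorm j) (hsq j)
    calc ∑ j, ∑ i, x j i ^ 4 ≤ ∑ _j : Fin d, Omegaval d cmin cmax :=
          Finset.sum_le_sum (fun j _ => hblock j)
      _ = (d : ℝ) * Omegaval d cmin cmax := by
          rw [Finset.sum_const, Finset.card_univ, Fintype.card_fin, nsmul_eq_mul]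
  · -- cmin = cmax : every x j i ^ 2 equals cmin, and d * cmin = 1
    subst heq
    have hxeq : ∀ j i, x j i ^ 2 = cmin := fun j i =>
      le_antisymm (hsq j i).2 (hsq j i).1
    have j0 : Fin d := ⟨0, hd⟩
    have hda : (d : ℝ) * cmin = 1 := by
      have := hnorm j0
      rw [Finset.sum_congr rfl (fun i _ => hxeq j0 i)] at this
      simpa [Finset.sum_const, Finset.card_univ, mul_comm] using this
    have hS : ∑ j : Fin d, ∑ i, x j i ^ 4 = (d : ℝ) * ((d : ℝ) * cmin ^ 2) := by
      have : ∀ j, ∑ i, x j i ^ 4 = (d : ℝ) * cmin ^ 2 := by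
        intro j
        rw [hsum4 j, Finset.sum_congr rfl (fun i _ => by rw [hxeq j i])]
        simp [Finset.sum_const, Finset.card_univ, mul_comm]
      rw [Finset.sum_congr rfl (fun j _ => this j)]
      simp [Finset.sum_const, Finset.card_univ, mul_comm]
    rw [hS]
    have hOmega : Omegaval d cmin cmin = (d : ℝ) * cmin ^ 2 := by
      rw [Omegaval, Lval, if_neg (lt_irrefl cmin)]
      nlinarith [hda]
    rw [hOmega]
end

section
/- Let {u_a}_{a=0}^{d-1} and {v_{a'}}_{a'=0}^{d-1} be two orthonormal bases of ℂ^d and suppose c_min ≤ |⟨u_a, v_{a'}⟩|² ≤ c_max for all a, a', where 0 ≤ c_min ≤ c_max ≤ 1. Then Σ_{a,a'=0}^{d-1} |⟨u_a, v_{a'}⟩|⁴ ≤ d·Ω, where Ω = L c_max² + (d − L − 1) c_min² + (1 − L c_max − (d − L − 1) c_min)² and L = ⌊(1 − c_min d)/(c_max − c_min)⌋ if c_max > c_min, L = d if c_max = c_min. -/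
open Matrix BigOperators

private 
lemma lemA (Δ : ℝ) : ∀ (n : ℕ) (t : Fin n → ℝ), (∀ i, 0 ≤ t i ∧ t i ≤ Δ) →
    ∀ (L : ℕ) (ρ : ℝ), 0 ≤ ρ → ρ ≤ Δ → (∑ i, t i) = L * Δ + ρ →
    ∑ i, (t i)^2 ≤ L * Δ^2 + ρ^2 := by
  intro n
  induction n with
  | zero =>
      intro t ht L ρ hρ0 hρΔ hsum
      simp only [Finset.univ_eq_empty, Finset.sum_empty]
      positivity
  | succ n ih =>
      intro t ht L ρ hρ0 hρΔ hsum
      rw [Fin.sum_univ_castSucc] at hsum ⊢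
      obtain ⟨hx0, hxΔ⟩ := ht (Fin.last n)
      by_cases hcase : t (Fin.last n) ≤ ρ
      · have h := ih (fun i => t i.castSucc) (fun i => ht _) L (ρ - t (Fin.last n))
          (by linarith) (by linarith) (by linarith)
        nlinarith [h]
      · push_neg at hcase
        have hsum' : ∑ i : Fin n, t i.castSucc = L * Δ + ρ - t (Fin.last n) := by linarith
        have hnn : (0:ℝ) ≤ ∑ i : Fin n, t i.castSucc :=
          Finset.sum_nonneg fun i _ => (ht _).1
        match L with
        | 0 =>
          exfalso
          simp only [Nat.cast_zero, zero_mul, zero_add] at hsum'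
          linarith
        | (L+1) =>
          have h := ih (fun i => t i.castSucc) (fun i => ht _) L (Δ + ρ - t (Fin.last n))
            (by linarith) (by linarith) (by push_cast at hsum' ⊢; linarith)
          push_cast at h ⊢
          nlinarith [h]

private lemma rowBound (d : ℕ) (cmin cmax : ℝ) (h0 : 0 ≤ cmin) (h1 : cmin ≤ cmax)
    (p : Fin d → ℝ) (hp : ∀ i, cmin ≤ p i ∧ p i ≤ cmax) (hsum : ∑ i, p i = 1) :
    ∑ i, (p i)^2 ≤ Omegaval d cmin cmax := by
  rcases lt_or_eq_of_le h1 with hlt | heq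
  · -- cmin < cmax
    have hΔ0 : (0:ℝ) < cmax - cmin := by linarith
    have hSt : ∑ i, (p i - cmin) = 1 - cmin * d := by
      rw [Finset.sum_sub_distrib, hsum]
      simp [Finset.sum_const, Finset.card_univ]
      ring
    have hS0 : (0:ℝ) ≤ 1 - cmin * d := by
      rw [← hSt]; exact Finset.sum_nonneg fun i _ => by linarith [(hp i).1]
    set Li : ℤ := ⌊(1 - cmin * d) / (cmax - cmin)⌋ with hLi
    have hLi0 : (0:ℤ) ≤ Li := Int.floor_nonneg.mpr (by positivity)
    set L : ℕ := Li.toNat with hL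
    have hLcast : (L : ℝ) = (Li : ℝ) := by
      rw [hL]; exact_mod_cast congrArg (Int.cast : ℤ → ℝ) (Int.toNat_of_nonneg hLi0)
    have hfl : (Li : ℝ) * (cmax - cmin) ≤ 1 - cmin * d := by
      have h := Int.floor_le ((1 - cmin * d) / (cmax - cmin))
      rw [← hLi] at h
      calc (Li:ℝ) * (cmax - cmin) ≤ ((1 - cmin * d) / (cmax - cmin)) * (cmax - cmin) :=
            mul_le_mul_of_nonneg_right h (le_of_lt hΔ0)
        _ = 1 - cmin * d := div_mul_cancel₀ _ (ne_of_gt hΔ0)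
    have hfu : 1 - cmin * d < ((Li : ℝ) + 1) * (cmax - cmin) := by
      have h := Int.lt_floor_add_one ((1 - cmin * d) / (cmax - cmin))
      rw [← hLi] at h
      calc 1 - cmin * d = ((1 - cmin * d) / (cmax - cmin)) * (cmax - cmin) :=
            (div_mul_cancel₀ _ (ne_of_gt hΔ0)).symm
        _ < ((Li:ℝ) + 1) * (cmax - cmin) := by
            apply mul_lt_mul_of_pos_right _ hΔ0
            exact_mod_cast h
    set ρ : ℝ := (1 - cmin * d) - L * (cmax - cmin) with hρ
    have hρ0 : 0 ≤ ρ := by rw [hρ, hLcast]; linarith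
    have hρΔ : ρ ≤ cmax - cmin := by rw [hρ, hLcast]; linarith
    have key := lemA (cmax - cmin) d (fun i => p i - cmin)
      (fun i => by constructor <;> linarith [(hp i).1, (hp i).2]) L ρ hρ0 hρΔ
      (by rw [hSt, hρ]; ring)
    have expand : ∑ i, (p i)^2
        = (∑ i, (p i - cmin)^2) + 2*cmin - (d:ℝ)*cmin^2 := by
      have h1' : ∀ i : Fin d, (p i)^2 = (p i - cmin)^2 + (2*cmin*(p i) - cmin^2) := by
        intro i; ring
      rw [Finset.sum_congr rfl (fun i _ => h1' i), Finset.sum_add_distrib,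
        Finset.sum_sub_distrib, ← Finset.mul_sum, hsum]
      simp [Finset.sum_const, Finset.card_univ]
      ring
    have hΩ : Omegaval d cmin cmax
        = (L:ℝ)*(cmax-cmin)^2 + ρ^2 + 2*cmin - (d:ℝ)*cmin^2 := by
      simp only [Omegaval, Lval, if_pos hlt, ← hLi, ← hLcast, hρ]
      ring
    rw [expand, hΩ]
    linarith [key]
  · -- cmin = cmax
    have hpc : ∀ i, p i = cmin := fun i => le_antisymm (heq ▸ (hp i).2) (hp i).1
    have hdc : (d:ℝ) * cmin = 1 := by
      rw [← hsum, Finset.sum_congr rfl (fun i _ => hpc i)]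
      simp [Finset.sum_const, Finset.card_univ]
    have hsq : ∑ i, (p i)^2 = (d:ℝ) * cmin^2 := by
      rw [Finset.sum_congr rfl (fun i _ => by rw [hpc i])]
      simp [Finset.sum_const, Finset.card_univ]
    rw [hsq]
    simp only [Omegaval, Lval, if_neg (show ¬ cmin < cmax by rw [heq]; exact lt_irrefl cmax), ← heq]
    nlinarith [hdc]

private lemma rowsum (d : ℕ) (w : Fin d → ℂ) (v : Fin d → Fin d → ℂ)
    (hw : star w ⬝ᵥ w = 1)
    (hv : ∀ a b, star (v a) ⬝ᵥ v b = (if a = b then (1:ℂ) else 0)) :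
    ∑ a' : Fin d, (‖star w ⬝ᵥ v a'‖)^2 = 1 := by
  -- V Vᴴ = 1
  have hV : (Matrix.of v) * (Matrix.of v)ᴴ = 1 := by
    ext a b
    have h := hv b a
    simp only [dotProduct, Pi.star_apply, Complex.star_def] at h
    simp only [Matrix.mul_apply, Matrix.conjTranspose_apply, Matrix.of_apply,
      Matrix.one_apply, Complex.star_def]
    rw [show (∑ k, v a k * (starRingEnd ℂ) (v b k))
        = ∑ k, (starRingEnd ℂ) (v b k) * v a k from
      Finset.sum_congr rfl fun k _ => mul_comm _ _, h]
    by_cases hab : a = b <;> simp [hab, eq_comm]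
  have hV2 : (Matrix.of v)ᴴ * (Matrix.of v) = 1 := mul_eq_one_comm.mp hV
  have hcol : ∀ j k : Fin d, ∑ a' : Fin d, (starRingEnd ℂ) (v a' j) * v a' k
      = if j = k then (1:ℂ) else 0 := by
    intro j k
    have h := congrFun (congrFun hV2 j) k
    simpa [Matrix.mul_apply, Matrix.conjTranspose_apply, Matrix.of_apply,
      Matrix.one_apply, Complex.star_def] using h
  -- now the main computation, via casting to ℂ
  have hC : ((∑ a' : Fin d, (‖star w ⬝ᵥ v a'‖)^2 : ℝ) : ℂ) = 1 := by
    push_cast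
    calc (∑ a' : Fin d, ((‖star w ⬝ᵥ v a'‖ : ℂ))^2)
        = ∑ a' : Fin d, (star w ⬝ᵥ v a') * (starRingEnd ℂ) (star w ⬝ᵥ v a') := by
          apply Finset.sum_congr rfl; intro a' _
          rw [Complex.mul_conj]
          norm_cast
          exact Complex.sq_norm _
      _ = ∑ a' : Fin d, ∑ j, ∑ k, ((starRingEnd ℂ) (w j) * w k)
            * ((starRingEnd ℂ) (v a' k) * v a' j) := by
          apply Finset.sum_congr rfl; intro a' _
          simp only [dotProduct, Pi.star_apply, Complex.star_def, map_sum,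
            _root_.map_mul, Complex.conj_conj]
          rw [Finset.sum_mul_sum]
          apply Finset.sum_congr rfl; intro j _
          apply Finset.sum_congr rfl; intro k _
          ring
      _ = ∑ j, ∑ k, ((starRingEnd ℂ) (w j) * w k)
            * ∑ a' : Fin d, (starRingEnd ℂ) (v a' k) * v a' j := by
          rw [Finset.sum_comm]
          apply Finset.sum_congr rfl; intro j _
          rw [Finset.sum_comm]
          apply Finset.sum_congr rfl; intro k _
          rw [Finset.mul_sum]
      _ = ∑ j, (starRingEnd ℂ) (w j) * w j := by
          apply Finset.sum_congr rfl; intro j _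
          simp only [hcol]
          simp [Finset.sum_ite_eq, mul_ite]
      _ = 1 := by
          have h := hw
          simp only [dotProduct, Pi.star_apply, Complex.star_def] at h
          exact h
  exact_mod_cast hC

/-- If `{u_a}` and `{v_{a'}}` are orthonormal bases of `ℂ^d` with
`c_min ≤ |⟨u_a, v_{a'}⟩|² ≤ c_max` for all `a, a'`, where `0 ≤ c_min ≤ c_max ≤ 1`,
then `Σ_{a,a'} |⟨u_a, v_{a'}⟩|⁴ ≤ d·Ω`. -/
theorem stmt10 (d : ℕ) (u v : Fin d → Fin d → ℂ)
    (hu : ∀ a b, star (u a) ⬝ᵥ u b = (if a = b then (1 : ℂ) else 0))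
    (hv : ∀ a b, star (v a) ⬝ᵥ v b = (if a = b then (1 : ℂ) else 0))
    (cmin cmax : ℝ) (h0 : 0 ≤ cmin) (h1 : cmin ≤ cmax) (h2 : cmax ≤ 1)
    (hbound : ∀ a a', cmin ≤ ‖star (u a) ⬝ᵥ v a'‖ ^ 2 ∧
      ‖star (u a) ⬝ᵥ v a'‖ ^ 2 ≤ cmax) :
    ∑ a : Fin d, ∑ a' : Fin d, ‖star (u a) ⬝ᵥ v a'‖ ^ 4 ≤
      (d : ℝ) * Omegaval d cmin cmax := by
  have hrowle : ∀ a : Fin d,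
      ∑ a' : Fin d, ‖star (u a) ⬝ᵥ v a'‖ ^ 4 ≤ Omegaval d cmin cmax := by
    intro a
    have hsum1 : ∑ a' : Fin d, (‖star (u a) ⬝ᵥ v a'‖)^2 = 1 := by
      apply rowsum d (u a) v _ hv
      simpa using hu a a
    have hrb := rowBound d cmin cmax h0 h1
      (fun a' => (‖star (u a) ⬝ᵥ v a'‖)^2)
      (fun a' => hbound a a') hsum1
    calc ∑ a' : Fin d, ‖star (u a) ⬝ᵥ v a'‖ ^ 4
        = ∑ a' : Fin d, ((‖star (u a) ⬝ᵥ v a'‖)^2)^2 := by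
          apply Finset.sum_congr rfl; intro a' _; ring
      _ ≤ Omegaval d cmin cmax := hrb
  calc ∑ a : Fin d, ∑ a' : Fin d, ‖star (u a) ⬝ᵥ v a'‖ ^ 4
      ≤ ∑ _a : Fin d, Omegaval d cmin cmax :=
        Finset.sum_le_sum fun a _ => hrowle a
    _ = (d : ℝ) * Omegaval d cmin cmax := by
        simp [Finset.sum_const, Finset.card_univ, nsmul_eq_mul]
end
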